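/- Let δ > 0, τ > 0, and let (A, ζ₄) with A > 0 be a nontrivial equilibrium, i.e., f₁(A,ζ₄) = f₂(A,ζ₄) = 0. Then the Jacobian matrix J of (f₁, f₂) at (A, ζ₄) satisfies trace J = δ − 1/τ and det J = (5A²/(16τ))(A² − 1). -/

import Mathlib

open Matrix

/-- Right-hand side of the slow-flow amplitude equation for the 4-node network. -/
noncomputable def f₁ (A ζ₄ : ℝ) : ℝ :=
  (1 / 4) * ((1 - ζ₄) * A + 5 / 4 * A ^ 3 - 5 / 16 * A ^ 5)

/-- Right-hand side of the autonomous damping dynamics for the 4-node network. -/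
noncomputable def f₂ (δ τ A ζ₄ : ℝ) : ℝ :=
  τ⁻¹ * (-ζ₄ + δ + 1 + 5 / 8 * A ^ 2)

/-- Jacobian matrix of the planar vector field `(f₁, f₂)` with respect to `(A, ζ₄)`. -/
noncomputable def J (δ τ A ζ₄ : ℝ) : Matrix (Fin 2) (Fin 2) ℝ :=
  !![deriv (fun a => f₁ a ζ₄) A, deriv (fun z => f₁ A z) ζ₄;
     deriv (fun a => f₂ δ τ a ζ₄) A, deriv (fun z => f₂ δ τ A z) ζ₄]

/-- At any nontrivial equilibrium, the Jacobian satisfies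
`trace J = δ − 1/τ` and `det J = (5A²/(16τ))(A² − 1)`. -/
theorem stmt_5 (δ τ A ζ₄ : ℝ) (hδ : 0 < δ) (hτ : 0 < τ) (hA : 0 < A)
    (h1 : f₁ A ζ₄ = 0) (h2 : f₂ δ τ A ζ₄ = 0) :
    (J δ τ A ζ₄).trace = δ - 1 / τ ∧
    (J δ τ A ζ₄).det = (5 * A ^ 2 / (16 * τ)) * (A ^ 2 - 1) := by
  have hτ' : τ ≠ 0 := ne_of_gt hτ
  have hA' : A ≠ 0 := ne_of_gt hA
  have dA1 : deriv (fun a => f₁ a ζ₄) A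
      = (1 / 4) * ((1 - ζ₄) + 5 / 4 * (3 * A ^ 2) - 5 / 16 * (5 * A ^ 4)) := by
    have h : HasDerivAt (fun a : ℝ => f₁ a ζ₄)
        ((1 / 4) * ((1 - ζ₄) + 5 / 4 * (3 * A ^ 2) - 5 / 16 * (5 * A ^ 4))) A := by
      have : HasDerivAt (fun a : ℝ => (1 - ζ₄) * a + 5 / 4 * a ^ 3 - 5 / 16 * a ^ 5)
          ((1 - ζ₄) * 1 + 5 / 4 * (3 * A ^ 2) - 5 / 16 * (5 * A ^ 4)) A := by
        have h1 := ((hasDerivAt_id A).const_mul (1 - ζ₄))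
        have h2 := ((hasDerivAt_pow 3 A).const_mul (5 / 4 : ℝ))
        have h3 := ((hasDerivAt_pow 5 A).const_mul (5 / 16 : ℝ))
        have := (h1.add h2).sub h3
        exact this.congr_deriv (by push_cast; ring)
      have := this.const_mul (1 / 4 : ℝ)
      exact this.congr_deriv (by ring)
    exact h.deriv
  have dZ1 : deriv (fun z => f₁ A z) ζ₄ = -(1 / 4) * A := by
    have h : HasDerivAt (fun z : ℝ => f₁ A z) (-(1 / 4) * A) ζ₄ := by
      have : HasDerivAt (fun z : ℝ => (1 - z) * A + 5 / 4 * A ^ 3 - 5 / 16 * A ^ 5)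
          (-A) ζ₄ := by
        have h1 : HasDerivAt (fun z : ℝ => (1 - z) * A) (-A) ζ₄ := by
          have := ((hasDerivAt_id ζ₄).const_sub (1 : ℝ)).mul_const A
          simpa using this
        simpa using (h1.add_const (5 / 4 * A ^ 3)).sub_const (5 / 16 * A ^ 5)
      have := this.const_mul (1 / 4 : ℝ)
      exact this.congr_deriv (by ring)
    exact h.deriv
  have dA2 : deriv (fun a => f₂ δ τ a ζ₄) A = τ⁻¹ * (5 / 4 * A) := by
    have h : HasDerivAt (fun a : ℝ => f₂ δ τ a ζ₄) (τ⁻¹ * (5 / 4 * A)) A := by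
      have : HasDerivAt (fun a : ℝ => -ζ₄ + δ + 1 + 5 / 8 * a ^ 2) (5 / 4 * A) A := by
        have h1 := (hasDerivAt_pow 2 A).const_mul (5 / 8 : ℝ)
        have := h1.const_add (-ζ₄ + δ + 1)
        exact this.congr_deriv (by push_cast; ring)
      exact this.const_mul τ⁻¹
    exact h.deriv
  have dZ2 : deriv (fun z => f₂ δ τ A z) ζ₄ = -τ⁻¹ := by
    have h : HasDerivAt (fun z : ℝ => f₂ δ τ A z) (-τ⁻¹) ζ₄ := by
      have : HasDerivAt (fun z : ℝ => -z + δ + 1 + 5 / 8 * A ^ 2) (-1 : ℝ) ζ₄ := by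
        simpa using (((hasDerivAt_id ζ₄).neg.add_const δ).add_const (1:ℝ)).add_const (5 / 8 * A ^ 2)
      have := this.const_mul τ⁻¹
      exact this.congr_deriv (by ring)
    exact h.deriv
  have e1 : (1 - ζ₄) = -(5 / 4) * A ^ 2 + 5 / 16 * A ^ 4 := by
    have h1' : ((1 - ζ₄) + 5 / 4 * A ^ 2 - 5 / 16 * A ^ 4) * A = 0 * A := by
      have := h1; unfold f₁ at this; nlinarith [this]
    have := mul_right_cancel₀ hA' h1'
    linarith
  have e2 : ζ₄ = δ + 1 + 5 / 8 * A ^ 2 := by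
    have := h2; unfold f₂ at this
    have h2' : -ζ₄ + δ + 1 + 5 / 8 * A ^ 2 = 0 := by
      field_simp at this; linarith
    linarith
  have hδval : δ = 5 / 8 * A ^ 2 - 5 / 16 * A ^ 4 := by
    rw [e2] at e1; linarith
  have htr : (J δ τ A ζ₄).trace = deriv (fun a => f₁ a ζ₄) A + deriv (fun z => f₂ δ τ A z) ζ₄ := by
    simp only [_root_.J, Matrix.trace_fin_two_of]
  have hdet : (J δ τ A ζ₄).det = deriv (fun a => f₁ a ζ₄) A * deriv (fun z => f₂ δ τ A z) ζ₄
      - deriv (fun z => f₁ A z) ζ₄ * deriv (fun a => f₂ δ τ a ζ₄) A := by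
    simp only [_root_.J, Matrix.det_fin_two_of]
  constructor
  · rw [htr, dA1, dZ2, e1, hδval]
    field_simp
    ring
  · rw [hdet, dA1, dZ1, dA2, dZ2, e1]
    field_simp
    ring
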